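/- arXiv:1603.05936 — 3 statements merged into one kernel-verified Lean document; each statement's English description precedes it below -/
import Mathlib

section
/- The function F_1(ξ) = ξ^{1/m} (C_m - κ_m ξ^{(m+1)/m})_+^{1/(m-1)}, with κ_m = (m-1)/(2m(m+1)), satisfies the profile ODE (F_1^m)''(ξ) + (1/(2m)) ξ F_1'(ξ) + (1/m) F_1(ξ) = 0 for all ξ in the open interval (0, (C_m/κ_m)^{m/(m+1)}) where F_1 is positive. -/
open Real Set

lemma auxD (κ C p a b : ℝ) (ξ : ℝ) (hξ : 0 < ξ) (hu : C - κ * ξ ^ p ≠ 0) :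
    HasDerivAt (fun x : ℝ => x ^ a * (C - κ * x ^ p) ^ b)
      (a * ξ ^ (a - 1) * (C - κ * ξ ^ p) ^ b
        + ξ ^ a * ((-(κ * (p * ξ ^ (p - 1)))) * b * (C - κ * ξ ^ p) ^ (b - 1))) ξ := by
  have h1 : HasDerivAt (fun x : ℝ => x ^ a) (a * ξ ^ (a - 1)) ξ :=
    Real.hasDerivAt_rpow_const (Or.inl hξ.ne')
  have h2 : HasDerivAt (fun x : ℝ => C - κ * x ^ p) (-(κ * (p * ξ ^ (p - 1)))) ξ := by
    have h3 := ((Real.hasDerivAt_rpow_const (p := p) (Or.inl hξ.ne')).const_mul κ)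
    have h4 := (hasDerivAt_const ξ C).sub h3
    simp only [zero_sub] at h4
    exact h4
  exact h1.mul (h2.rpow_const (Or.inl hu))

/-- The explicit dipole profile `F₁(ξ) = ξ^{1/m} (C_m - κ_m ξ^{(m+1)/m})_+^{1/(m-1)}`,
with `κ_m = (m-1)/(2m(m+1))`, satisfies the profile ODE
`(F₁^m)'' + (1/(2m)) ξ F₁' + (1/m) F₁ = 0` on `(0, (C_m/κ_m)^{m/(m+1)})`. -/
theorem stmt0 (m C : ℝ) (hm : 1 < m) (hC : 0 < C)
    (κ : ℝ) (hκ : κ = (m - 1) / (2 * m * (m + 1)))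
    (F : ℝ → ℝ)
    (hF : ∀ ξ ∈ Ioo (0 : ℝ) ((C / κ) ^ (m / (m + 1))),
      F ξ = ξ ^ (1 / m) * (C - κ * ξ ^ ((m + 1) / m)) ^ (1 / (m - 1))) :
    ∀ ξ ∈ Ioo (0 : ℝ) ((C / κ) ^ (m / (m + 1))),
      deriv (deriv (fun y => F y ^ m)) ξ + (1 / (2 * m)) * ξ * deriv F ξ
        + (1 / m) * F ξ = 0 := by
  have hm0 : (0:ℝ) < m := by linarith
  have hm1 : (0:ℝ) < m - 1 := by linarith
  have hκ0 : 0 < κ := by rw [hκ]; positivity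
  set S : Set ℝ := Ioo (0 : ℝ) ((C / κ) ^ (m / (m + 1))) with hS
  have hSo : IsOpen S := isOpen_Ioo
  -- positivity of u on S
  have huS : ∀ x ∈ S, 0 < C - κ * x ^ ((m + 1) / m) := by
    intro x hx
    have h1 : x ^ ((m+1)/m) < ((C/κ) ^ (m/(m+1))) ^ ((m+1)/m) :=
      Real.rpow_lt_rpow hx.1.le hx.2 (by positivity)
    rw [← Real.rpow_mul (by positivity)] at h1
    have he : m/(m+1) * ((m+1)/m) = 1 := by field_simp
    rw [he, Real.rpow_one] at h1
    have := (lt_div_iff₀ hκ0).mp h1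
    linarith
  -- the power function H = F^m on S
  set H : ℝ → ℝ := fun x => x ^ (1:ℝ) * (C - κ * x ^ ((m + 1) / m)) ^ (m/(m-1)) with hH
  have hFmH : ∀ x ∈ S, F x ^ m = H x := by
    intro x hx
    have hu := huS x hx
    rw [hF x hx, Real.mul_rpow (Real.rpow_nonneg hx.1.le _) (Real.rpow_nonneg hu.le _),
      ← Real.rpow_mul hx.1.le, ← Real.rpow_mul hu.le,
      one_div_mul_cancel hm0.ne', show 1 / (m - 1) * m = m / (m - 1) by field_simp,
      Real.rpow_one, hH]
    simp [Real.rpow_one]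
  -- first derivative of H, as a function
  set D1 : ℝ → ℝ := fun x => x ^ (0:ℝ) * (C - κ * x ^ ((m+1)/m)) ^ (m/(m-1))
      + (-(κ * ((m+1)/m) * (m/(m-1)))) *
        (x ^ ((m+1)/m) * (C - κ * x ^ ((m+1)/m)) ^ (m/(m-1) - 1)) with hD1
  have hsplit : ∀ x : ℝ, 0 < x → x ^ ((m+1)/m) = x * x ^ (1/m) := by
    intro x hx
    rw [show (m+1)/m = 1 + 1/m by field_simp, Real.rpow_add hx, Real.rpow_one]
  have hH1 : ∀ x ∈ S, HasDerivAt H (D1 x) x := by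
    intro x hx
    have hu := huS x hx
    have h := auxD κ C ((m+1)/m) 1 (m/(m-1)) x hx.1 hu.ne'
    rw [hH]
    convert h using 1
    simp only [hD1]
    rw [sub_self, Real.rpow_zero, Real.rpow_one,
      show (m+1)/m - 1 = 1/m by field_simp; ring, hsplit x hx.1]
    ring
  have hD1deriv : ∀ x ∈ S, HasDerivAt D1
      ((0 * x ^ ((0:ℝ) - 1) * (C - κ * x ^ ((m+1)/m)) ^ (m/(m-1))
        + x ^ (0:ℝ) * ((-(κ * ((m+1)/m * x ^ ((m+1)/m - 1)))) * (m/(m-1))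
            * (C - κ * x ^ ((m+1)/m)) ^ (m/(m-1) - 1)))
       + (-(κ * ((m+1)/m) * (m/(m-1)))) *
         ((m+1)/m * x ^ ((m+1)/m - 1) * (C - κ * x ^ ((m+1)/m)) ^ (m/(m-1) - 1)
          + x ^ ((m+1)/m) * ((-(κ * ((m+1)/m * x ^ ((m+1)/m - 1)))) * (m/(m-1) - 1)
              * (C - κ * x ^ ((m+1)/m)) ^ (m/(m-1) - 1 - 1)))) x := by
    intro x hx
    have hu := huS x hx
    exact (auxD κ C ((m+1)/m) 0 (m/(m-1)) x hx.1 hu.ne').add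
      (((auxD κ C ((m+1)/m) ((m+1)/m) (m/(m-1) - 1) x hx.1 hu.ne').const_mul
        (-(κ * ((m+1)/m) * (m/(m-1))))))
  -- now the pointwise conclusion
  intro ξ hξ
  have hu := huS ξ hξ
  have hnhds : S ∈ nhds ξ := hSo.mem_nhds hξ
  have hev1 : (fun y => F y ^ m) =ᶠ[nhds ξ] H := Filter.eventuallyEq_of_mem hnhds hFmH
  have hev2 : deriv H =ᶠ[nhds ξ] D1 :=
    Filter.eventuallyEq_of_mem hnhds fun x hx => (hH1 x hx).deriv
  have hsnd : deriv (deriv (fun y => F y ^ m)) ξ = deriv D1 ξ :=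
    (hev1.deriv.trans hev2).deriv_eq
  rw [hsnd, (hD1deriv ξ hξ).deriv]
  -- first derivative of F
  have hevF : F =ᶠ[nhds ξ] fun x => x ^ (1/m) * (C - κ * x ^ ((m+1)/m)) ^ (1/(m-1)) :=
    Filter.eventuallyEq_of_mem hnhds hF
  have hdF : deriv F ξ = 1/m * ξ ^ (1/m - 1) * (C - κ * ξ ^ ((m+1)/m)) ^ (1/(m-1))
      + ξ ^ (1/m) * ((-(κ * ((m+1)/m * ξ ^ ((m+1)/m - 1)))) * (1/(m-1))
          * (C - κ * ξ ^ ((m+1)/m)) ^ (1/(m-1) - 1)) := by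
    rw [hevF.deriv_eq]
    exact (auxD κ C ((m+1)/m) (1/m) (1/(m-1)) ξ hξ.1 hu.ne').deriv
  rw [hdF, hF ξ hξ]
  have e1 : (m+1)/m - 1 = 1/m := by field_simp; ring
  have e2 : m/(m-1) - 1 = 1/(m-1) := by field_simp; ring
  rw [e1, e2]
  rw [hsplit ξ hξ.1] at hu ⊢
  rw [show (1:ℝ)/(m-1) - 1 = 1/(m-1) + (-1) by ring,
    show (1:ℝ)/m - 1 = 1/m + (-1) by ring,
    show m/(m-1) = 1 + 1/(m-1) by field_simp; ring,
    Real.rpow_add hu, Real.rpow_add hu, Real.rpow_add hξ.1,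
    Real.rpow_one, Real.rpow_zero, Real.rpow_neg_one, Real.rpow_neg_one]
  have hune : C - κ * (ξ * ξ ^ (1/m)) ≠ 0 := hu.ne'
  have hξne : ξ ≠ 0 := hξ.1.ne'
  have hmne : m ≠ 0 := hm0.ne'
  have hm1ne : m - 1 ≠ 0 := hm1.ne'
  rw [hκ] at hune ⊢
  field_simp
  ring
end

section
/- If k solves t k'(t) = -α(k(t)^m - k(t)) with k > 1 and F satisfies the profile ODE with F' > 0 on the relevant interval, then V(x,t) = k(t) t^{-α} F((x+a)/t^β) satisfies V_t - (V^m)_xx = t^{-α-1}(k(t)^m - k(t)) β ξ F'(ξ) ≥ 0, where ξ = (x+a)/t^β; i.e., V is a supersolution. -/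
open Real Set

/-- If `k` solves `t k'(t) = -α(k^m - k)` with `k > 1`, and `F` satisfies the profile
ODE with `F' > 0`, then `V(x,t) = k(t) t^{-α} F((x+a)/t^β)` satisfies
`V_t - (V^m)_xx = t^{-α-1}(k^m - k) β ξ F'(ξ) ≥ 0`: it is a supersolution. -/
theorem stmt11 (m a T : ℝ) (hm : 1 < m) (ha : 0 < a) (hT : 0 < T)
    (I : Set ℝ) (hI : IsOpen I) (hIsub : I ⊆ Ioi (0 : ℝ))
    (F : ℝ → ℝ)
    (hFnonneg : ∀ ξ ∈ I, 0 ≤ F ξ)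
    (hFdiff : ∀ ξ ∈ I, DifferentiableAt ℝ F ξ)
    (hFdiff2 : ∀ ξ ∈ I, DifferentiableAt ℝ (deriv F) ξ)
    (hFm : ∀ ξ ∈ I, DifferentiableAt ℝ (fun y => F y ^ m) ξ)
    (hFm2 : ∀ ξ ∈ I, DifferentiableAt ℝ (deriv (fun y => F y ^ m)) ξ)
    (hODE : ∀ ξ ∈ I,
      deriv (deriv (fun y => F y ^ m)) ξ + (1 / (2 * m)) * ξ * deriv F ξ
        + (1 / m) * F ξ = 0)
    (hF'pos : ∀ ξ ∈ I, 0 < deriv F ξ)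
    (k : ℝ → ℝ) (hk : ∀ t : ℝ, T ≤ t → 1 < k t)
    (hkdiff : ∀ t : ℝ, T ≤ t → DifferentiableAt ℝ k t)
    (hkODE : ∀ t : ℝ, T ≤ t → t * deriv k t = -(1 / m) * (k t ^ m - k t))
    (V : ℝ → ℝ → ℝ)
    (hV : ∀ x t : ℝ, V x t = k t * t ^ (-(1 / m)) * F ((x + a) * t ^ (-(1 / (2 * m))))) :
    ∀ x t : ℝ, T ≤ t → (x + a) * t ^ (-(1 / (2 * m))) ∈ I →
      (deriv (fun s => V x s) t - deriv (deriv (fun y => V y t ^ m)) x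
        = t ^ (-(1 / m) - 1) * (k t ^ m - k t) * ((1 / (2 * m)) *
            ((x + a) * t ^ (-(1 / (2 * m)))) *
            deriv F ((x + a) * t ^ (-(1 / (2 * m)))))) ∧
      0 ≤ deriv (fun s => V x s) t - deriv (deriv (fun y => V y t ^ m)) x := by
  intro x t ht hξ
  have ht0 : 0 < t := lt_of_lt_of_le hT ht
  have hm0 : m ≠ 0 := by positivity
  have hk0 : 0 < k t := lt_trans one_pos (hk t ht)
  set ξ : ℝ := (x + a) * t ^ (-(1 / (2 * m))) with hξdef
  have hξpos : 0 < ξ := hIsub hξ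
  -- time derivative
  have hVx : (fun s => V x s) = fun s => k s * s ^ (-(1 / m)) * F ((x + a) * s ^ (-(1 / (2 * m)))) := by
    funext s; exact hV x s
  have hpowα : HasDerivAt (fun s : ℝ => s ^ (-(1 / m))) (-(1 / m) * t ^ (-(1 / m) - 1)) t :=
    Real.hasDerivAt_rpow_const (Or.inl ht0.ne')
  have hpowβ : HasDerivAt (fun s : ℝ => s ^ (-(1 / (2 * m)))) (-(1 / (2 * m)) * t ^ (-(1 / (2 * m)) - 1)) t :=
    Real.hasDerivAt_rpow_const (Or.inl ht0.ne')
  have hηt : HasDerivAt (fun s : ℝ => (x + a) * s ^ (-(1 / (2 * m))))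
      ((x + a) * (-(1 / (2 * m)) * t ^ (-(1 / (2 * m)) - 1))) t := hpowβ.const_mul (x + a)
  have hFc : HasDerivAt (fun s : ℝ => F ((x + a) * s ^ (-(1 / (2 * m)))))
      (deriv F ξ * ((x + a) * (-(1 / (2 * m)) * t ^ (-(1 / (2 * m)) - 1)))) t :=
    ((hFdiff ξ hξ).hasDerivAt.comp t hηt)
  have hkt : HasDerivAt k (deriv k t) t := (hkdiff t ht).hasDerivAt
  have hDt : HasDerivAt (fun s => k s * s ^ (-(1 / m)) * F ((x + a) * s ^ (-(1 / (2 * m)))))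
      ((deriv k t * t ^ (-(1 / m)) + k t * (-(1 / m) * t ^ (-(1 / m) - 1))) * F ξ
        + (k t * t ^ (-(1 / m))) * (deriv F ξ * ((x + a) * (-(1 / (2 * m)) * t ^ (-(1 / (2 * m)) - 1))))) t :=
    (hkt.mul hpowα).mul hFc
  have hDt' : deriv (fun s => V x s) t
      = (deriv k t * t ^ (-(1 / m)) + k t * (-(1 / m) * t ^ (-(1 / m) - 1))) * F ξ
        + (k t * t ^ (-(1 / m))) * (deriv F ξ * ((x + a) * (-(1 / (2 * m)) * t ^ (-(1 / (2 * m)) - 1)))) := by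
    rw [hVx]; exact hDt.deriv
  -- spatial second derivative
  set c : ℝ := t ^ (-(1 / (2 * m))) with hc
  set Cm : ℝ := (k t * t ^ (-(1 / m))) ^ m with hCmdef
  set U : Set ℝ := (fun y => (y + a) * c) ⁻¹' I with hU
  have hUopen : IsOpen U := hI.preimage (by continuity)
  have hxU : x ∈ U := hξ
  have heq : ∀ y ∈ U, V y t ^ m = Cm * F ((y + a) * c) ^ m := by
    intro y hy
    rw [hV y t]
    exact Real.mul_rpow (by positivity) (hFnonneg _ hy)
  have hη : ∀ y : ℝ, HasDerivAt (fun z : ℝ => (z + a) * c) (1 * c) y := fun y =>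
    ((hasDerivAt_id y).add_const a).mul_const c
  have hWD : ∀ y ∈ U, HasDerivAt (fun z => Cm * F ((z + a) * c) ^ m)
      (Cm * (deriv (fun y => F y ^ m) ((y + a) * c) * (1 * c))) y := by
    intro y hy
    exact (((hFm _ hy).hasDerivAt.comp y (hη y))).const_mul Cm
  have hev : ∀ y ∈ U, deriv (fun z => V z t ^ m) y
      = Cm * (deriv (fun y => F y ^ m) ((y + a) * c) * (1 * c)) := by
    intro y hy
    have h1 : (fun z => V z t ^ m) =ᶠ[nhds y] (fun z => Cm * F ((z + a) * c) ^ m) :=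
      Filter.eventually_of_mem (hUopen.mem_nhds hy) heq
    rw [h1.deriv_eq]
    exact (hWD y hy).deriv
  have hev' : deriv (fun z => V z t ^ m) =ᶠ[nhds x]
      (fun y => Cm * (deriv (fun y => F y ^ m) ((y + a) * c) * (1 * c))) :=
    Filter.eventually_of_mem (hUopen.mem_nhds hxU) hev
  have hD2 : deriv (deriv (fun y => V y t ^ m)) x
      = Cm * (deriv (deriv (fun y => F y ^ m)) ξ * (1 * c) * (1 * c)) := by
    rw [hev'.deriv_eq]
    exact ((((hFm2 ξ hξ).hasDerivAt.comp x (hη x)).mul_const (1 * c)).const_mul Cm).deriv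
  -- algebraic identities
  have hk' : deriv k t = -(1 / m) * (k t ^ m - k t) / t := by
    rw [eq_div_iff ht0.ne']
    linear_combination hkODE t ht
  have hG'' : deriv (deriv (fun y => F y ^ m)) ξ
      = -((1 / (2 * m)) * ξ * deriv F ξ) - (1 / m) * F ξ := by
    have h := hODE ξ hξ; linarith
  have hCm : Cm = k t ^ m * t⁻¹ := by
    rw [hCmdef, Real.mul_rpow hk0.le (Real.rpow_pos_of_pos ht0 _).le,
      ← Real.rpow_mul ht0.le]
    have : -(1 / m) * m = -1 := by field_simp
    rw [this, Real.rpow_neg_one]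
  have hA : t ^ (-(1 / m) - 1) = t ^ (-(1 / m)) * t⁻¹ := by
    rw [Real.rpow_sub ht0, Real.rpow_one, div_eq_mul_inv]
  have hB : t ^ (-(1 / (2 * m)) - 1) = c * t⁻¹ := by
    rw [Real.rpow_sub ht0, Real.rpow_one, div_eq_mul_inv, hc]
  have hq2 : t ^ (-(1 / m)) = c * c := by
    rw [hc, ← Real.rpow_add ht0]
    congr 1
    ring
  have key : deriv (fun s => V x s) t - deriv (deriv (fun y => V y t ^ m)) x
      = t ^ (-(1 / m) - 1) * (k t ^ m - k t) * ((1 / (2 * m)) * ξ * deriv F ξ) := by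
    rw [hDt', hD2, hk', hG'', hCm, hA, hB, hq2, hξdef, hc]
    field_simp
    ring
  refine ⟨key, ?_⟩
  rw [key]
  have h1 : 0 < t ^ (-(1 / m) - 1) := Real.rpow_pos_of_pos ht0 _
  have h2 : 0 < k t ^ m - k t := by
    have : k t ^ (1 : ℝ) < k t ^ m := by
      rw [Real.rpow_lt_rpow_left_iff (hk t ht)]; exact hm
    rw [Real.rpow_one] at this
    linarith
  have h3 : 0 < (1 / (2 * m)) := by positivity
  exact le_of_lt (mul_pos (mul_pos h1 h2) (mul_pos (mul_pos h3 hξpos) (hF'pos ξ hξ)))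
end

section
/- If c solves t c'(t) = α(c(t) - c(t)^m) with 0 < c < 1 and F satisfies the profile ODE with F' > 0, then v(x,t) = c(t) t^{-α} F((x-a)/t^β) satisfies v_t - (v^m)_xx = -t^{-α-1}(c(t) - c(t)^m) β ξ F'(ξ) ≤ 0, where ξ = (x-a)/t^β; i.e., v is a subsolution. -/
open Real Set

/-- If `c` solves `t c'(t) = α(c - c^m)` with `0 < c < 1`, and `F` satisfies the profile
ODE with `F' > 0`, then `v(x,t) = c(t) t^{-α} F((x-a)/t^β)` satisfies
`v_t - (v^m)_xx = -t^{-α-1}(c - c^m) β ξ F'(ξ) ≤ 0`: it is a subsolution. -/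
theorem stmt12 (m a T : ℝ) (hm : 1 < m) (ha : 0 < a) (hT : 0 < T)
    (I : Set ℝ) (hI : IsOpen I) (hIsub : I ⊆ Ioi (0 : ℝ))
    (F : ℝ → ℝ)
    (hFnonneg : ∀ ξ ∈ I, 0 ≤ F ξ)
    (hFdiff : ∀ ξ ∈ I, DifferentiableAt ℝ F ξ)
    (hFdiff2 : ∀ ξ ∈ I, DifferentiableAt ℝ (deriv F) ξ)
    (hFm : ∀ ξ ∈ I, DifferentiableAt ℝ (fun y => F y ^ m) ξ)
    (hFm2 : ∀ ξ ∈ I, DifferentiableAt ℝ (deriv (fun y => F y ^ m)) ξ)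
    (hODE : ∀ ξ ∈ I,
      deriv (deriv (fun y => F y ^ m)) ξ + (1 / (2 * m)) * ξ * deriv F ξ
        + (1 / m) * F ξ = 0)
    (hF'pos : ∀ ξ ∈ I, 0 < deriv F ξ)
    (c : ℝ → ℝ) (hc : ∀ t : ℝ, T ≤ t → c t ∈ Ioo (0 : ℝ) 1)
    (hcdiff : ∀ t : ℝ, T ≤ t → DifferentiableAt ℝ c t)
    (hcODE : ∀ t : ℝ, T ≤ t → t * deriv c t = (1 / m) * (c t - c t ^ m))
    (v : ℝ → ℝ → ℝ)
    (hv : ∀ x t : ℝ, v x t = c t * t ^ (-(1 / m)) * F ((x - a) * t ^ (-(1 / (2 * m))))) :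
    ∀ x t : ℝ, T ≤ t → (x - a) * t ^ (-(1 / (2 * m))) ∈ I →
      (deriv (fun s => v x s) t - deriv (deriv (fun y => v y t ^ m)) x
        = -(t ^ (-(1 / m) - 1) * (c t - c t ^ m) * ((1 / (2 * m)) *
            ((x - a) * t ^ (-(1 / (2 * m)))) *
            deriv F ((x - a) * t ^ (-(1 / (2 * m))))))) ∧
      deriv (fun s => v x s) t - deriv (deriv (fun y => v y t ^ m)) x ≤ 0 := by
  have hm0 : m ≠ 0 := by linarith
  intro x t ht hmem
  have ht0 : (0 : ℝ) < t := lt_of_lt_of_le hT ht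
  have htne : t ≠ 0 := ne_of_gt ht0
  set α : ℝ := 1 / m with hαdef
  set β : ℝ := 1 / (2 * m) with hβdef
  set ξ : ℝ := (x - a) * t ^ (-β) with hξdef
  -- linear inner function in space
  have hlin : ∀ y : ℝ, HasDerivAt (fun z => (z - a) * t ^ (-β)) (t ^ (-β)) y := by
    intro y
    simpa using ((hasDerivAt_id y).sub_const a).mul_const (t ^ (-β))
  -- time derivative
  have hrα : HasDerivAt (fun s : ℝ => s ^ (-α)) (-α * t ^ (-α - 1)) t :=
    Real.hasDerivAt_rpow_const (Or.inl htne)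
  have hrβ : HasDerivAt (fun s : ℝ => s ^ (-β)) (-β * t ^ (-β - 1)) t :=
    Real.hasDerivAt_rpow_const (Or.inl htne)
  have hinner_t : HasDerivAt (fun s : ℝ => (x - a) * s ^ (-β))
      ((x - a) * (-β * t ^ (-β - 1))) t := hrβ.const_mul (x - a)
  have hFt : HasDerivAt (fun s : ℝ => F ((x - a) * s ^ (-β)))
      (deriv F ξ * ((x - a) * (-β * t ^ (-β - 1)))) t := by
    have h := ((hFdiff ξ hmem).hasDerivAt).comp t hinner_t
    simpa [← hξdef, Function.comp_def] using h
  have hct : HasDerivAt c (deriv c t) t := (hcdiff t ht).hasDerivAt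
  have hvt : HasDerivAt (fun s => c s * s ^ (-α) * F ((x - a) * s ^ (-β)))
      ((deriv c t * t ^ (-α) + c t * (-α * t ^ (-α - 1))) * F ξ
        + c t * t ^ (-α) * (deriv F ξ * ((x - a) * (-β * t ^ (-β - 1))))) t := by
    have h := (hct.mul hrα).mul hFt
    rw [← hξdef] at h
    exact h
  have htime : deriv (fun s => v x s) t
      = (deriv c t * t ^ (-α) + c t * (-α * t ^ (-α - 1))) * F ξ
        + c t * t ^ (-α) * (deriv F ξ * ((x - a) * (-β * t ^ (-β - 1)))) := by
    have he : (fun s => v x s) = fun s => c s * s ^ (-α) * F ((x - a) * s ^ (-β)) :=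
      funext fun s => hv x s
    rw [he, hvt.deriv]
  -- space part
  set U : Set ℝ := (fun y => (y - a) * t ^ (-β)) ⁻¹' I with hUdef
  have hUopen : IsOpen U := hI.preimage (by continuity)
  have hmemU : ∀ y ∈ U, (y - a) * t ^ (-β) ∈ I := fun y hy => hy
  have hxU : x ∈ U := by
    show (x - a) * t ^ (-β) ∈ I
    rw [← hξdef]; exact hmem
  have hαm : -α * m = -1 := by rw [hαdef]; field_simp
  have hveq : ∀ y ∈ U, v y t ^ m
      = c t ^ m * t ^ (-(1 : ℝ)) * (fun z => F z ^ m) ((y - a) * t ^ (-β)) := by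
    intro y hy
    have hFy : 0 ≤ F ((y - a) * t ^ (-β)) := hFnonneg _ (hmemU y hy)
    have hc0 : 0 < c t := (hc t ht).1
    have htα : (0 : ℝ) ≤ t ^ (-α) := (Real.rpow_pos_of_pos ht0 _).le
    rw [hv]
    rw [Real.mul_rpow (by positivity) hFy, Real.mul_rpow hc0.le htα,
      ← Real.rpow_mul ht0.le, hαm]
  have hd1 : ∀ y ∈ U, HasDerivAt
      (fun z => c t ^ m * t ^ (-(1 : ℝ)) * (fun w => F w ^ m) ((z - a) * t ^ (-β)))
      (c t ^ m * t ^ (-(1 : ℝ)) * (deriv (fun w => F w ^ m) ((y - a) * t ^ (-β)) * t ^ (-β)))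
      y := by
    intro y hy
    exact (((hFm _ (hmemU y hy)).hasDerivAt).comp y (hlin y)).const_mul _
  have hderiv1 : ∀ y ∈ U, deriv (fun z => v z t ^ m) y
      = c t ^ m * t ^ (-(1 : ℝ)) * (deriv (fun w => F w ^ m) ((y - a) * t ^ (-β)) * t ^ (-β)) := by
    intro y hy
    have heqy : (fun z => v z t ^ m) =ᶠ[nhds y]
        (fun z => c t ^ m * t ^ (-(1 : ℝ)) * (fun w => F w ^ m) ((z - a) * t ^ (-β))) :=
      Filter.eventually_of_mem (hUopen.mem_nhds hy) hveq
    rw [heqy.deriv_eq, (hd1 y hy).deriv]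
  have hd2 : HasDerivAt
      (fun y => c t ^ m * t ^ (-(1 : ℝ)) * (deriv (fun w => F w ^ m) ((y - a) * t ^ (-β)) * t ^ (-β)))
      (c t ^ m * t ^ (-(1 : ℝ)) * (deriv (deriv (fun w => F w ^ m)) ξ * t ^ (-β) * t ^ (-β))) x := by
    have h := ((hFm2 ξ hmem).hasDerivAt).comp x (hlin x)
    rw [hξdef] at h
    have h2 := (h.mul_const (t ^ (-β))).const_mul (c t ^ m * t ^ (-(1 : ℝ)))
    exact h2
  have hspace : deriv (deriv (fun y => v y t ^ m)) x
      = c t ^ m * t ^ (-(1 : ℝ)) * (deriv (deriv (fun w => F w ^ m)) ξ * t ^ (-β) * t ^ (-β)) := by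
    have heq2 : deriv (fun z => v z t ^ m) =ᶠ[nhds x]
        (fun y => c t ^ m * t ^ (-(1 : ℝ)) *
          (deriv (fun w => F w ^ m) ((y - a) * t ^ (-β)) * t ^ (-β))) :=
      Filter.eventually_of_mem (hUopen.mem_nhds hxU) hderiv1
    rw [heq2.deriv_eq, hd2.deriv]
  -- substitutions
  have hG2 : deriv (deriv (fun w => F w ^ m)) ξ = -(β * ξ * deriv F ξ + α * F ξ) := by
    have h := hODE ξ hmem
    linarith
  have hcderiv : deriv c t = α * (c t - c t ^ m) / t := by
    have h := hcODE t ht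
    field_simp
    linarith
  have hA1 : t ^ (-α - 1) = t ^ (-α) * t⁻¹ := by
    rw [show -α - 1 = -α + (-1) by ring, Real.rpow_add ht0, Real.rpow_neg_one]
  have hB1 : t ^ (-β - 1) = t ^ (-β) * t⁻¹ := by
    rw [show -β - 1 = -β + (-1) by ring, Real.rpow_add ht0, Real.rpow_neg_one]
  have hBB : t ^ (-α) = t ^ (-β) * t ^ (-β) := by
    rw [← Real.rpow_add ht0]
    congr 1
    rw [hαdef, hβdef]
    field_simp
    ring
  have hkey : deriv (fun s => v x s) t - deriv (deriv (fun y => v y t ^ m)) x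
      = -(t ^ (-α - 1) * (c t - c t ^ m) * (β * ξ * deriv F ξ)) := by
    rw [htime, hspace, hG2, hcderiv, hA1, hB1, Real.rpow_neg_one, hBB, hξdef]
    field_simp
    ring
  refine ⟨hkey, ?_⟩
  rw [hkey]
  have h1 : (0 : ℝ) < t ^ (-α - 1) := Real.rpow_pos_of_pos ht0 _
  have hc0 : 0 < c t := (hc t ht).1
  have hc1 : c t < 1 := (hc t ht).2
  have h2 : c t ^ m ≤ c t := by
    calc c t ^ m ≤ c t ^ (1 : ℝ) :=
          Real.rpow_le_rpow_of_exponent_ge hc0 hc1.le hm.le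
      _ = c t := Real.rpow_one _
  have hξpos : 0 < ξ := hIsub hmem
  have hβpos : 0 < β := by rw [hβdef]; positivity
  have hF' : 0 < deriv F ξ := hF'pos ξ hmem
  have : 0 ≤ t ^ (-α - 1) * (c t - c t ^ m) * (β * ξ * deriv F ξ) := by
    apply mul_nonneg (mul_nonneg h1.le (by linarith))
    positivity
  linarith
end
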